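/- Let K be a field of characteristic zero and let Q be a finite set carrying two partial orders ≼ and ≼', both of which are forest posets, such that for all distinct a, b ∈ Q, a and b are comparable for ≼ if and only if they are incomparable for ≼'. For b ∈ Q define w_b := Σ_{a ∈ Q, a ≼' b} Σ_{c ∈ Q, a ≼ c} ε_c ∈ K^Q, with (ε_c) the standard basis of K^Q, and define the linear map Φ : V → V by Φ(e(x,i,y)) := Σ_{c,d ∈ Q} (w_x)_c·(w_y)_d·e(c,i,d). Then Φ is a linear automorphism of V and Φ maps the relation space R_{(Q,≼')} bijectively onto the annihilator R_{(Q,≼)}^⊥ of R_{(Q,≼)} with respect to the bilinear form ⟨·,·⟩. (This is the presentation-level form of the theorem that for a thin forest poset Q, the map ⋆_b ↦ Σ_{a ≼' b} Σ_{a ≼ c} Ō_c extends to an operad isomorphism from As(Q^⊥) to the Koszul dual As(Q)^!.) -/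

import Mathlib

open scoped Classical
set_option linter.unusedSectionVars false
set_option linter.unusedVariables false


/-- The minimum of two comparable elements with respect to an explicit partial order. -/
noncomputable def pminP {Q : Type*} (P : PartialOrder Q) (a b : Q) : Q :=
  if P.le a b then a else b

/-- The standard basis vector `e(a,i,b)` of `V = (Q × {1,2} × Q) → K` (with `0 : Fin 2`
encoding position `1` and `1 : Fin 2` encoding position `2`). -/
noncomputable def e (K : Type*) [Field K] {Q : Type*} (a : Q) (i : Fin 2) (b : Q) :
    (Q × Fin 2 × Q) → K :=
  fun p => if p = (a, i, b) then 1 else 0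

/-- The space of relations `R_(Q,≼)` for an explicit partial order `≼` on `Q`: the span
of `e(a,1,b) − e(a↑b,2,a↑b)` and `e(a↑b,1,a↑b) − e(a,2,b)` for `≼`-comparable `a, b`. -/
noncomputable def relSpaceP (K : Type*) [Field K] {Q : Type*} (P : PartialOrder Q) :
    Submodule K ((Q × Fin 2 × Q) → K) :=
  Submodule.span K
    {x | ∃ a b : Q, (P.le a b ∨ P.le b a) ∧
      (x = e K a 0 b - e K (pminP P a b) 1 (pminP P a b) ∨
       x = e K (pminP P a b) 0 (pminP P a b) - e K a 1 b)}

/-- The bilinear form on `V` with `⟨e(a,i,b), e(a',i',b')⟩ = 1` if `(a,b) = (a',b')` and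
`i = i' = 1`, `= −1` if `(a,b) = (a',b')` and `i = i' = 2`, and `0` otherwise. -/
noncomputable def bform {K : Type*} [Field K] {Q : Type*} [Fintype Q]
    (u w : (Q × Fin 2 × Q) → K) : K :=
  ∑ a : Q, ∑ b : Q, (u (a, 0, b) * w (a, 0, b) - u (a, 1, b) * w (a, 1, b))

lemma bform_add {K : Type*} [Field K] {Q : Type*} [Fintype Q]
    (r u v : (Q × Fin 2 × Q) → K) :
    bform r (u + v) = bform r u + bform r v := by
  unfold bform
  rw [← Finset.sum_add_distrib]
  refine Finset.sum_congr rfl fun a _ => ?_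
  rw [← Finset.sum_add_distrib]
  refine Finset.sum_congr rfl fun b _ => ?_
  simp only [Pi.add_apply]
  ring

lemma bform_smul {K : Type*} [Field K] {Q : Type*} [Fintype Q]
    (c : K) (r v : (Q × Fin 2 × Q) → K) :
    bform r (c • v) = c * bform r v := by
  unfold bform
  rw [Finset.mul_sum]
  refine Finset.sum_congr rfl fun a _ => ?_
  rw [Finset.mul_sum]
  refine Finset.sum_congr rfl fun b _ => ?_
  simp only [Pi.smul_apply, smul_eq_mul]
  ring

/-- The annihilator `S^⊥ = {v ∈ V : ⟨r, v⟩ = 0 for all r ∈ S}` of a subspace `S` of `V`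
with respect to the bilinear form `⟨·,·⟩`. -/
noncomputable def annih (K : Type*) [Field K] (Q : Type*) [Fintype Q]
    (S : Submodule K ((Q × Fin 2 × Q) → K)) : Submodule K ((Q × Fin 2 × Q) → K) where
  carrier := {v | ∀ r ∈ S, bform r v = 0}
  add_mem' := by
    intro u v hu hv r hr
    rw [bform_add, hu r hr, hv r hr, add_zero]
  zero_mem' := by
    intro r hr
    simp [bform]
  smul_mem' := by
    intro c v hv r hr
    rw [bform_smul, hv r hr, mul_zero]


/-- A forest poset structure for an explicit partial order: whenever `a ≼ c` and
`b ≼ c`, the elements `a` and `b` are `≼`-comparable. -/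
def IsForestOrder {Q : Type*} (P : PartialOrder Q) : Prop :=
  ∀ a b c : Q, P.le a c → P.le b c → P.le a b ∨ P.le b a

/-- The vector `w_b = Σ_{a ≼' b} Σ_{a ≼ c} ε_c ∈ K^Q`. -/
noncomputable def wvec (K : Type*) [Field K] {Q : Type*} [Fintype Q]
    (P P' : PartialOrder Q) (b : Q) : Q → K :=
  fun c => ∑ a : Q, if P'.le a b ∧ P.le a c then 1 else 0

/-- The linear map `Φ : V → V` determined by
`Φ(e(x,i,y)) = Σ_{c,d} (w_x)_c·(w_y)_d·e(c,i,d)`. -/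
noncomputable def Phi (K : Type*) [Field K] {Q : Type*} [Fintype Q]
    (P P' : PartialOrder Q) (v : (Q × Fin 2 × Q) → K) : (Q × Fin 2 × Q) → K :=
  fun p => ∑ x : Q, ∑ y : Q,
    v (x, p.2.1, y) * wvec K P P' x p.1 * wvec K P P' y p.2.2



section Aux

variable {K : Type*} [Field K] {Q : Type*} [Fintype Q]

lemma bform_zero_left (w : (Q × Fin 2 × Q) → K) : bform 0 w = 0 := by
  simp [bform]

lemma bform_add_left (u v w : (Q × Fin 2 × Q) → K) :
    bform (u + v) w = bform u w + bform v w := by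
  unfold bform
  rw [← Finset.sum_add_distrib]
  refine Finset.sum_congr rfl fun a _ => ?_
  rw [← Finset.sum_add_distrib]
  refine Finset.sum_congr rfl fun b _ => ?_
  simp only [Pi.add_apply]; ring

lemma bform_smul_left (c : K) (u w : (Q × Fin 2 × Q) → K) :
    bform (c • u) w = c * bform u w := by
  unfold bform
  rw [Finset.mul_sum]
  refine Finset.sum_congr rfl fun a _ => ?_
  rw [Finset.mul_sum]
  refine Finset.sum_congr rfl fun b _ => ?_
  simp only [Pi.smul_apply, smul_eq_mul]; ring

lemma bform_sub_left (u v w : (Q × Fin 2 × Q) → K) :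
    bform (u - v) w = bform u w - bform v w := by
  unfold bform
  rw [← Finset.sum_sub_distrib]
  refine Finset.sum_congr rfl fun a _ => ?_
  rw [← Finset.sum_sub_distrib]
  refine Finset.sum_congr rfl fun b _ => ?_
  simp only [Pi.sub_apply]; ring

lemma bform_sub_right (r u v : (Q × Fin 2 × Q) → K) :
    bform r (u - v) = bform r u - bform r v := by
  unfold bform
  rw [← Finset.sum_sub_distrib]
  refine Finset.sum_congr rfl fun a _ => ?_
  rw [← Finset.sum_sub_distrib]
  refine Finset.sum_congr rfl fun b _ => ?_
  simp only [Pi.sub_apply]; ring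

lemma bform_e_left (a : Q) (j : Fin 2) (b : Q) (v : (Q × Fin 2 × Q) → K) :
    bform (e K a j b) v = if j = 0 then v (a, 0, b) else - v (a, 1, b) := by
  unfold bform e
  fin_cases j <;>
    simp [Prod.ext_iff, ite_and, ite_mul, Finset.sum_ite_eq', Finset.sum_sub_distrib,
      show ((1:Fin 2) = 0) ↔ False from by decide, show ((0:Fin 2) = 1) ↔ False from by decide]

lemma Phi_e (P P' : PartialOrder Q) (x : Q) (i : Fin 2) (y : Q) (p : Q × Fin 2 × Q) :
    Phi K P P' (e K x i y) p =
      if p.2.1 = i then wvec K P P' x p.1 * wvec K P P' y p.2.2 else 0 := by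
  unfold Phi e
  by_cases hpi : p.2.1 = i
  · simp [hpi, Prod.ext_iff, ite_and, ite_mul, zero_mul, one_mul, Finset.sum_ite_eq',
      mul_comm, mul_assoc]
  · simp [hpi, Prod.ext_iff, ite_and, ite_mul, zero_mul,
      fun x' y' => show ¬((x' : Q) = x ∧ p.2.1 = i ∧ (y' : Q) = y) from fun hc => hpi hc.2.1]

lemma Phi_add (P P' : PartialOrder Q) (u v : (Q × Fin 2 × Q) → K) :
    Phi K P P' (u + v) = Phi K P P' u + Phi K P P' v := by
  funext p
  simp [Phi, add_mul, Finset.sum_add_distrib]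

lemma Phi_smul (P P' : PartialOrder Q) (c : K) (v : (Q × Fin 2 × Q) → K) :
    Phi K P P' (c • v) = c • Phi K P P' v := by
  funext p
  simp [Phi, Finset.mul_sum, mul_assoc]

lemma Phi_sub (P P' : PartialOrder Q) (u v : (Q × Fin 2 × Q) → K) :
    Phi K P P' (u - v) = Phi K P P' u - Phi K P P' v := by
  funext p
  simp [Phi, sub_mul, Finset.sum_sub_distrib]

noncomputable def phiLM (P P' : PartialOrder Q) :
    ((Q × Fin 2 × Q) → K) →ₗ[K] ((Q × Fin 2 × Q) → K) where
  toFun := Phi K P P'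
  map_add' := Phi_add P P'
  map_smul' := Phi_smul P P'

end Aux

section Zeta
variable {K : Type*} [Field K] {Q : Type*} [Fintype Q]

def dualPO {Q : Type*} (P : PartialOrder Q) : PartialOrder Q where
  le a b := P.le b a
  lt a b := P.lt b a
  le_refl a := P.le_refl a
  le_trans a b c h1 h2 := P.le_trans c b a h2 h1
  le_antisymm a b h1 h2 := P.le_antisymm a b h2 h1
  lt_iff_le_not_ge a b := P.lt_iff_le_not_ge b a

lemma zeta_inj (P : PartialOrder Q) (f : Q → K)
    (hf : ∀ c, ∑ t : Q, (if P.le t c then f t else 0) = 0) : ∀ c, f c = 0 := by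
  have key : ∀ c : Q, f c = - ∑ t ∈ Finset.univ.filter (fun t => P.le t c ∧ t ≠ c), f t := by
    intro c
    have h1 : ∑ t ∈ Finset.univ.filter (fun t => P.le t c), f t = 0 := by
      rw [Finset.sum_filter]; exact hf c
    have h2 : Finset.univ.filter (fun t => P.le t c)
        = insert c (Finset.univ.filter (fun t => P.le t c ∧ t ≠ c)) := by
      ext t
      simp only [Finset.mem_filter, Finset.mem_univ, true_and, Finset.mem_insert]
      constructor
      · intro ht
        by_cases htc : t = c
        · exact Or.inl htc
        · exact Or.inr ⟨ht, htc⟩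
      · rintro (rfl | ⟨ht, _⟩)
        · exact P.le_refl t
        · exact ht
    have h3 : c ∉ Finset.univ.filter (fun t => P.le t c ∧ t ≠ c) := by
      simp
    rw [h2, Finset.sum_insert h3] at h1
    linear_combination h1
  suffices H : ∀ n (c : Q), (Finset.univ.filter (fun t => P.le t c ∧ t ≠ c)).card ≤ n → f c = 0 by
    intro c; exact H _ c le_rfl
  intro n
  induction n with
  | zero =>
    intro c hc
    have : Finset.univ.filter (fun t => P.le t c ∧ t ≠ c) = ∅ :=
      Finset.card_eq_zero.mp (Nat.le_zero.mp hc)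
    rw [key c, this, Finset.sum_empty, neg_zero]
  | succ n ih =>
    intro c hc
    rw [key c]
    have hz : ∀ t ∈ Finset.univ.filter (fun t => P.le t c ∧ t ≠ c), f t = 0 := by
      intro t ht
      simp only [Finset.mem_filter, Finset.mem_univ, true_and] at ht
      apply ih
      have hsub : Finset.univ.filter (fun s => P.le s t ∧ s ≠ t)
          ⊆ (Finset.univ.filter (fun s => P.le s c ∧ s ≠ c)).erase t := by
        intro s hs
        simp only [Finset.mem_filter, Finset.mem_univ, true_and] at hs
        rw [Finset.mem_erase]
        refine ⟨hs.2, ?_⟩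
        simp only [Finset.mem_filter, Finset.mem_univ, true_and]
        refine ⟨P.le_trans s t c hs.1 ht.1, fun hsc => ?_⟩
        subst hsc
        exact ht.2 (P.le_antisymm t s ht.1 hs.1)
      have hle := Finset.card_le_card hsub
      have hm : t ∈ Finset.univ.filter (fun s => P.le s c ∧ s ≠ c) := by
        simp only [Finset.mem_filter, Finset.mem_univ, true_and]; exact ht
      rw [Finset.card_erase_of_mem hm] at hle
      omega
    rw [Finset.sum_eq_zero hz, neg_zero]

lemma upzeta_inj (P : PartialOrder Q) (f : Q → K)
    (hf : ∀ t, ∑ c : Q, (if P.le t c then f c else 0) = 0) : ∀ c, f c = 0 :=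
  zeta_inj (dualPO P) f hf

lemma M_inj (P P' : PartialOrder Q) (v : Q → K)
    (hv : ∀ c, ∑ x : Q, wvec K P P' x c * v x = 0) : v = 0 := by
  set g : Q → K := fun t => ∑ x : Q, if P'.le t x then v x else 0 with hg
  have hstep : ∀ c, ∑ t : Q, (if P.le t c then g t else 0) = 0 := by
    intro c
    have h1 : ∀ t : Q, (if P.le t c then g t else 0)
        = ∑ x : Q, (if P'.le t x ∧ P.le t c then v x else 0) := by
      intro t
      by_cases htc : P.le t c
      · rw [if_pos htc, hg]
        exact Finset.sum_congr rfl fun x _ => by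
          by_cases h' : P'.le t x <;> simp [h', htc]
      · rw [if_neg htc]
        rw [eq_comm, Finset.sum_eq_zero]
        intro x _
        rw [if_neg (fun hc => htc hc.2)]
    calc ∑ t : Q, (if P.le t c then g t else 0)
        = ∑ t : Q, ∑ x : Q, (if P'.le t x ∧ P.le t c then v x else 0) :=
          Finset.sum_congr rfl fun t _ => h1 t
      _ = ∑ x : Q, ∑ t : Q, (if P'.le t x ∧ P.le t c then v x else 0) := Finset.sum_comm
      _ = ∑ x : Q, wvec K P P' x c * v x := by
          refine Finset.sum_congr rfl fun x _ => ?_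
          unfold wvec
          rw [Finset.sum_mul]
          exact Finset.sum_congr rfl fun t _ => by
            by_cases hc : P'.le t x ∧ P.le t c <;> simp [hc]
      _ = 0 := hv c
  have hg0 : ∀ t, g t = 0 := zeta_inj P g hstep
  have hv0 : ∀ x, v x = 0 := upzeta_inj P' v (fun t => hg0 t)
  funext x; exact hv0 x

end Zeta

section Comb

variable {K : Type*} [Field K] {Q : Type*} [Fintype Q] (P P' : PartialOrder Q)

lemma Phi_inj : Function.Injective (Phi K P P') := by
  have hker : ∀ v : (Q × Fin 2 × Q) → K, Phi K P P' v = 0 → v = 0 := by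
    intro v hv
    funext p
    obtain ⟨x, i, y⟩ := p
    have hB : ∀ d, (fun x' => ∑ y' : Q, v (x', i, y') * wvec K P P' y' d) = 0 := by
      intro d
      apply M_inj P P'
      intro c
      have h0 : Phi K P P' v (c, i, d) = 0 := by rw [hv]; rfl
      rw [← h0]
      unfold Phi
      refine Finset.sum_congr rfl fun x' _ => ?_
      rw [Finset.mul_sum]
      refine Finset.sum_congr rfl fun y' _ => ?_
      ring
    have hrow : (fun y' => v (x, i, y')) = 0 := by
      apply M_inj P P'
      intro d
      have := congrFun (hB d) x
      simp only [Pi.zero_apply] at this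
      rw [← this]
      refine Finset.sum_congr rfl fun y' _ => ?_
      ring
    exact congrFun hrow y
  intro u v huv
  have : Phi K P P' (u - v) = 0 := by rw [Phi_sub, huv, sub_self]
  have := hker _ this
  exact sub_eq_zero.mp this

variable {P P'}

lemma pmin_le_left {a b : Q} (hab : P.le a b ∨ P.le b a) : P.le (pminP P a b) a := by
  unfold pminP
  split
  · exact P.le_refl a
  · next hn => exact hab.resolve_left hn

lemma pmin_le_right {a b : Q} (hab : P.le a b ∨ P.le b a) : P.le (pminP P a b) b := by
  unfold pminP
  split
  · next hle => exact hle
  · exact P.le_refl b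

lemma le_pmin {t a b : Q} (hta : P.le t a) (htb : P.le t b) : P.le t (pminP P a b) := by
  unfold pminP
  split
  · exact hta
  · exact htb

lemma pmin_self (a : Q) : pminP P a a = a := by
  unfold pminP; split <;> rfl

section withH
variable (hP : IsForestOrder P) (hP' : IsForestOrder P')
  (h : ∀ a b : Q, a ≠ b → ((P.le a b ∨ P.le b a) ↔ ¬ (P'.le a b ∨ P'.le b a)))

include hP hP' h

lemma uniq_wit {t s u u' : Q} (ht : P.le t u) (hs : P.le s u)
    (ht' : P'.le t u') (hs' : P'.le s u') : t = s := by
  by_contra hne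
  exact (h t s hne).mp (hP t s u ht hs) (hP' t s u' ht' hs')

lemma wvec_eq (x c : Q) :
    wvec K P P' x c = if ∃ t, P'.le t x ∧ P.le t c then (1 : K) else 0 := by
  unfold wvec
  split
  · next hex =>
    obtain ⟨t0, ht0⟩ := hex
    have hpt : ∀ a : Q, (if P'.le a x ∧ P.le a c then (1:K) else 0)
        = if a = t0 then 1 else 0 := by
      intro a
      by_cases ha : P'.le a x ∧ P.le a c
      · rw [if_pos ha, if_pos (uniq_wit hP hP' h ha.2 ht0.2 ha.1 ht0.1)]
      · rw [if_neg ha, if_neg]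
        rintro rfl
        exact ha ⟨ht0.1, ht0.2⟩
    rw [Finset.sum_congr rfl fun a _ => hpt a]
    simp
  · next hex =>
    apply Finset.sum_eq_zero
    intro a _
    rw [if_neg (fun hc => hex ⟨a, hc⟩)]

lemma wvec_mul {a b x y : Q} (hab : P.le a b ∨ P.le b a) (hxy : P'.le x y ∨ P'.le y x) :
    wvec K P P' x a * wvec K P P' y b
      = if ∃ t, P.le t a ∧ P.le t b ∧ P'.le t x ∧ P'.le t y then (1:K) else 0 := by
  rw [wvec_eq hP hP' h, wvec_eq hP hP' h]
  by_cases hex : ∃ t, P.le t a ∧ P.le t b ∧ P'.le t x ∧ P'.le t y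
  · obtain ⟨t, h1, h2, h3, h4⟩ := hex
    rw [if_pos ⟨t, h3, h1⟩, if_pos ⟨t, h4, h2⟩, if_pos ⟨t, h1, h2, h3, h4⟩, one_mul]
  · rw [if_neg hex]
    by_cases h1 : ∃ t, P'.le t x ∧ P.le t a
    · rw [if_pos h1, one_mul, if_neg]
      rintro ⟨s, hsy, hsb⟩
      obtain ⟨t, htx, hta⟩ := h1
      have hPcomp : P.le t s ∨ P.le s t := by
        rcases hab with hab | hab
        · exact hP t s b (P.le_trans t a b hta hab) hsb
        · exact hP t s a hta (P.le_trans s b a hsb hab)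
      have hP'comp : P'.le t s ∨ P'.le s t := by
        rcases hxy with hxy | hxy
        · exact hP' t s y (P'.le_trans t x y htx hxy) hsy
        · exact hP' t s x htx (P'.le_trans s y x hsy hxy)
      have hts : t = s := by
        by_contra hne
        exact (h t s hne).mp hPcomp hP'comp
      subst hts
      exact hex ⟨t, hta, hsb, htx, hsy⟩
    · rw [if_neg h1, zero_mul]

lemma prod_eq_I {a b x y : Q} (hab : P.le a b ∨ P.le b a) (hxy : P'.le x y ∨ P'.le y x) :
    wvec K P P' x a * wvec K P P' y b
      = wvec K P P' (pminP P' x y) (pminP P a b) * wvec K P P' (pminP P' x y) (pminP P a b) := by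
  rw [wvec_mul hP hP' h hab hxy,
    wvec_mul hP hP' h (Or.inl (P.le_refl _)) (Or.inl (P'.le_refl _))]
  refine if_congr ⟨?_, ?_⟩ rfl rfl
  · rintro ⟨t, h1, h2, h3, h4⟩
    exact ⟨t, le_pmin h1 h2, le_pmin h1 h2, le_pmin (P := P') h3 h4, le_pmin (P := P') h3 h4⟩
  · rintro ⟨t, h1, _, h3, _⟩
    exact ⟨t, P.le_trans _ _ _ h1 (pmin_le_left hab), P.le_trans _ _ _ h1 (pmin_le_right hab),
      P'.le_trans _ _ _ h3 (pmin_le_left hxy), P'.le_trans _ _ _ h3 (pmin_le_right hxy)⟩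

lemma prod_eq_II {a b x y : Q} (hab : P.le a b ∨ P.le b a) (hxy : P'.le x y ∨ P'.le y x) :
    wvec K P P' x (pminP P a b) * wvec K P P' y (pminP P a b)
      = wvec K P P' (pminP P' x y) a * wvec K P P' (pminP P' x y) b := by
  rw [wvec_mul hP hP' h (Or.inl (P.le_refl _)) hxy,
    wvec_mul hP hP' h hab (Or.inl (P'.le_refl _))]
  refine if_congr ⟨?_, ?_⟩ rfl rfl
  · rintro ⟨t, h1, _, h3, h4⟩
    exact ⟨t, P.le_trans _ _ _ h1 (pmin_le_left hab), P.le_trans _ _ _ h1 (pmin_le_right hab),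
      le_pmin (P := P') h3 h4, le_pmin (P := P') h3 h4⟩
  · rintro ⟨t, h1, h2, h3, _⟩
    exact ⟨t, le_pmin h1 h2, le_pmin h1 h2,
      P'.le_trans _ _ _ h3 (pmin_le_left hxy), P'.le_trans _ _ _ h3 (pmin_le_right hxy)⟩

end withH
end Comb
section Orth

variable {K : Type*} [Field K] {Q : Type*} [Fintype Q] {P P' : PartialOrder Q}

lemma bform_e_Phi_e (a b x y : Q) (j i : Fin 2) :
    bform (e K a j b) (Phi K P P' (e K x i y)) =
      if j = i then (if j = 0 then (1:K) else -1) * (wvec K P P' x a * wvec K P P' y b)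
      else 0 := by
  rw [bform_e_left]
  fin_cases j <;> fin_cases i <;> simp [Phi_e]

variable (hP : IsForestOrder P) (hP' : IsForestOrder P')
  (h : ∀ a b : Q, a ≠ b → ((P.le a b ∨ P.le b a) ↔ ¬ (P'.le a b ∨ P'.le b a)))

include hP hP' h

lemma orth_gen (r' : (Q × Fin 2 × Q) → K)
    (hr' : ∃ x y : Q, (P'.le x y ∨ P'.le y x) ∧
      (r' = e K x 0 y - e K (pminP P' x y) 1 (pminP P' x y) ∨
       r' = e K (pminP P' x y) 0 (pminP P' x y) - e K x 1 y)) :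
    Phi K P P' r' ∈ annih K Q (relSpaceP K P) := by
  obtain ⟨x, y, hxy, hcase'⟩ := hr'
  show ∀ r ∈ relSpaceP K P, bform r (Phi K P P' r') = 0
  intro r hr
  induction hr using Submodule.span_induction with
  | zero => exact bform_zero_left _
  | add u v _ _ hu hv => rw [bform_add_left, hu, hv, add_zero]
  | smul c u _ hu => rw [bform_smul_left, hu, mul_zero]
  | mem g hg =>
    obtain ⟨a, b, hab, hcase⟩ := hg
    rcases hcase with rfl | rfl <;> rcases hcase' with rfl | rfl <;>
      simp only [Phi_sub, bform_sub_left, bform_sub_right, bform_e_Phi_e] <;>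
      norm_num [show ((0:Fin 2) = 1) ↔ False from by decide,
        show ((1:Fin 2) = 0) ↔ False from by decide]
    · rw [prod_eq_I hP hP' h hab hxy]; ring
    · rw [prod_eq_II hP hP' h hab hxy]; ring
    · rw [prod_eq_II hP hP' h hab hxy]; ring
    · rw [prod_eq_I hP hP' h hab hxy]; ring

end Orth
section Beta

variable {K : Type*} [Field K] {Q : Type*} [Fintype Q] {P : PartialOrder Q}

lemma e_val (a : Q) (i : Fin 2) (b : Q) (p : Q × Fin 2 × Q) :
    e K a i b p = if p = (a, i, b) then 1 else 0 := rfl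

lemma annih_cond {v : (Q × Fin 2 × Q) → K} (hv : v ∈ annih K Q (relSpaceP K P))
    {a b : Q} (hab : P.le a b ∨ P.le b a) :
    v (a, 0, b) + v (pminP P a b, 1, pminP P a b) = 0 ∧
    v (pminP P a b, 0, pminP P a b) + v (a, 1, b) = 0 := by
  have hv' : ∀ r ∈ relSpaceP K P, bform r v = 0 := hv
  have h0 := hv' _ (Submodule.subset_span ⟨a, b, hab, Or.inl rfl⟩)
  have h1 := hv' _ (Submodule.subset_span ⟨a, b, hab, Or.inr rfl⟩)
  rw [bform_sub_left, bform_e_left, bform_e_left] at h0 h1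
  norm_num [show ((1:Fin 2) = 0) ↔ False from by decide] at h0 h1
  constructor
  · linear_combination h0
  · linear_combination h1

noncomputable def uvec (K : Type*) [Field K] {Q : Type*} [Fintype Q]
    (P : PartialOrder Q) (m : Q) : (Q × Fin 2 × Q) → K :=
  ∑ p : Q × Q, if (P.le p.1 p.2 ∨ P.le p.2 p.1) ∧ pminP P p.1 p.2 = m
    then e K p.1 0 p.2 - e K p.1 1 p.2 else 0

lemma uvec_apply (m a b : Q) (j : Fin 2) :
    uvec K P m (a, j, b) = if (P.le a b ∨ P.le b a) ∧ pminP P a b = m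
      then (if j = 0 then (1:K) else -1) else 0 := by
  unfold uvec
  rw [Finset.sum_apply]
  simp only [apply_ite (fun g : (Q × Fin 2 × Q) → K => g (a, j, b)), Pi.sub_apply,
    Pi.zero_apply]
  rw [Finset.sum_eq_single (a, b)]
  · by_cases hc : (P.le a b ∨ P.le b a) ∧ pminP P a b = m
    · rw [if_pos hc, if_pos hc]
      fin_cases j <;>
        simp [e, Prod.ext_iff, show ((1:Fin 2) = 0) ↔ False from by decide,
          show ((0:Fin 2) = 1) ↔ False from by decide]
    · rw [if_neg hc, if_neg hc]
  · intro p _ hp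
    have h1 : ∀ i : Fin 2, e K p.1 i p.2 (a, j, b) = 0 := by
      intro i
      rw [e_val, if_neg]
      intro hcon
      rw [Prod.mk.injEq, Prod.mk.injEq] at hcon
      exact hp (Prod.ext_iff.mpr ⟨hcon.1.symm, hcon.2.2.symm⟩)
    split_ifs
    · rw [h1 0, h1 1, sub_zero]
    · rfl
  · intro hmem
    exact absurd (Finset.mem_univ _) hmem

lemma annih_le_span :
    annih K Q (relSpaceP K P) ≤ Submodule.span K
      (Set.range (Sum.elim
        (fun pj : {p : Q × Q // ¬ (P.le p.1 p.2 ∨ P.le p.2 p.1)} × Fin 2 =>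
          e K pj.1.1.1 pj.2 pj.1.1.2)
        (fun m : Q => uvec K P m))) := by
  intro v hv
  have hdec : v = (∑ m : Q, v (m, 0, m) • uvec K P m)
      + ∑ p : Q × Q, ∑ j : Fin 2,
          (if ¬ (P.le p.1 p.2 ∨ P.le p.2 p.1) then v (p.1, j, p.2) else 0) • e K p.1 j p.2 := by
    funext q
    obtain ⟨a, j, b⟩ := q
    simp only [Pi.add_apply, Finset.sum_apply, Pi.smul_apply, smul_eq_mul, uvec_apply]
    have S1 : (∑ m : Q, v (m, 0, m) *
        (if (P.le a b ∨ P.le b a) ∧ pminP P a b = m then (if j = 0 then (1:K) else -1) else 0))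
        = if P.le a b ∨ P.le b a then
            v (pminP P a b, 0, pminP P a b) * (if j = 0 then (1:K) else -1) else 0 := by
      by_cases hab : P.le a b ∨ P.le b a
      · simp only [hab, true_and, if_pos hab, mul_ite, mul_zero]
        rw [Finset.sum_ite_eq]
        simp
      · simp [hab]
    have S2 : (∑ p : Q × Q, ∑ j' : Fin 2,
        (if ¬ (P.le p.1 p.2 ∨ P.le p.2 p.1) then v (p.1, j', p.2) else 0)
          * e K p.1 j' p.2 (a, j, b))
        = if ¬ (P.le a b ∨ P.le b a) then v (a, j, b) else 0 := by
      rw [Finset.sum_eq_single (a, b)]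
      · rw [Finset.sum_eq_single j]
        · have he : e K (a,b).1 j (a,b).2 (a, j, b) = 1 := by rw [e_val, if_pos rfl]
          rw [he, mul_one]
        · intro j' _ hj'
          have he : e K (a,b).1 j' (a,b).2 (a, j, b) = 0 := by
            rw [e_val, if_neg]
            intro hcon
            rw [Prod.mk.injEq, Prod.mk.injEq] at hcon
            exact hj' hcon.2.1.symm
          rw [he, mul_zero]
        · intro hmem; exact absurd (Finset.mem_univ _) hmem
      · intro p _ hp
        refine Finset.sum_eq_zero fun j' _ => ?_
        have he : e K p.1 j' p.2 (a, j, b) = 0 := by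
          rw [e_val, if_neg]
          intro hcon
          rw [Prod.mk.injEq, Prod.mk.injEq] at hcon
          exact hp (Prod.ext_iff.mpr ⟨hcon.1.symm, hcon.2.2.symm⟩)
        rw [he, mul_zero]
      · intro hmem; exact absurd (Finset.mem_univ _) hmem
    rw [S1, S2]
    by_cases hab : P.le a b ∨ P.le b a
    · rw [if_pos hab, if_neg (not_not_intro hab), add_zero]
      have hc1 := (annih_cond hv hab).1
      have hc2 := (annih_cond hv hab).2
      have hcd := (annih_cond hv (Or.inl (P.le_refl (pminP P a b)))).1
      rw [pmin_self] at hcd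
      by_cases hj : j = 0
      · subst hj
        rw [if_pos rfl, mul_one]
        linear_combination hc1 - hcd
      · rw [if_neg hj]
        have hj1 : j = 1 := by omega
        subst hj1
        linear_combination hc2
    · rw [if_neg hab, if_pos hab, zero_add]
  rw [hdec]
  apply Submodule.add_mem
  · apply Submodule.sum_mem
    intro m _
    exact Submodule.smul_mem _ _ (Submodule.subset_span ⟨Sum.inr m, rfl⟩)
  · apply Submodule.sum_mem
    intro p _
    apply Submodule.sum_mem
    intro j _
    by_cases hp : ¬ (P.le p.1 p.2 ∨ P.le p.2 p.1)
    · rw [if_pos hp]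
      exact Submodule.smul_mem _ _
        (Submodule.subset_span ⟨Sum.inl (⟨p, hp⟩, j), rfl⟩)
    · rw [if_neg hp, zero_smul]
      exact Submodule.zero_mem _

lemma beta_bound :
    Module.finrank K (annih K Q (relSpaceP K P)) ≤
      Fintype.card (({p : Q × Q // ¬ (P.le p.1 p.2 ∨ P.le p.2 p.1)} × Fin 2) ⊕ Q) := by
  classical
  set g := Sum.elim
        (fun pj : {p : Q × Q // ¬ (P.le p.1 p.2 ∨ P.le p.2 p.1)} × Fin 2 =>
          e K pj.1.1.1 pj.2 pj.1.1.2)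
        (fun m : Q => uvec K P m) with hg
  have h1 : Module.finrank K (annih K Q (relSpaceP K P))
      ≤ Module.finrank K (Submodule.span K (Set.range g)) :=
    Submodule.finrank_mono annih_le_span
  refine h1.trans ?_
  have h2 := finrank_span_le_card (R := K) (Set.range g)
  refine h2.trans ?_
  rw [Set.toFinset_range]
  exact (Finset.card_image_le).trans (le_of_eq (Finset.card_univ))

end Beta
section Alpha

variable {K : Type*} [Field K] {Q : Type*} [Fintype Q]

noncomputable def Lmap (K : Type*) [Field K] {Q : Type*} [Fintype Q] (P : PartialOrder Q) :
    ((Q × Fin 2 × Q) → K) →ₗ[K]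
      ((({p : Q × Q // ¬ (P.le p.1 p.2 ∨ P.le p.2 p.1)} × Fin 2) ⊕ Q) → K) where
  toFun v := Sum.elim (fun pj => v (pj.1.1.1, pj.2, pj.1.1.2)) (fun m => v (m, 0, m))
  map_add' u v := by funext i; cases i <;> simp
  map_smul' c v := by funext i; cases i <;> simp

variable {P P' : PartialOrder Q}
  (h : ∀ a b : Q, a ≠ b → ((P.le a b ∨ P.le b a) ↔ ¬ (P'.le a b ∨ P'.le b a)))

include h

lemma map_L_top : Submodule.map (Lmap K P) (relSpaceP K P') = ⊤ := by
  rw [relSpaceP, Submodule.map_span, eq_top_iff]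
  intro w _
  rw [pi_eq_sum_univ w]
  refine Submodule.sum_mem _ fun i _ => Submodule.smul_mem _ _ ?_
  obtain (⟨⟨⟨x, y⟩, hxy⟩, j⟩ | m) := i
  · -- incomparable-for-P pair (x,y); comparable for P'
    have hne : x ≠ y := by
      rintro rfl
      exact hxy (Or.inl (P.le_refl x))
    have hxy' : P'.le x y ∨ P'.le y x := by
      by_contra hc
      exact hxy ((h x y hne).mpr hc)
    by_cases hj : j = 0
    · subst hj
      have key : (fun j' => if (Sum.inl (⟨(x, y), hxy⟩, (0:Fin 2))
            : ({p : Q × Q // ¬ (P.le p.1 p.2 ∨ P.le p.2 p.1)} × Fin 2) ⊕ Q) = j'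
              then (1:K) else 0)
          = Lmap K P (e K x 0 y - e K (pminP P' x y) 1 (pminP P' x y)) := by
        funext i'
        obtain (⟨⟨⟨c, d⟩, hcd⟩, j'⟩ | m'') := i'
        · show _ = (e K x 0 y - e K (pminP P' x y) 1 (pminP P' x y)) (c, j', d)
          rw [Pi.sub_apply, e_val, e_val]
          have h2 : ((c, j', d) : Q × Fin 2 × Q) ≠ (pminP P' x y, 1, pminP P' x y) := by
            intro hcon
            rw [Prod.mk.injEq, Prod.mk.injEq] at hcon
            exact hcd (hcon.1 ▸ hcon.2.2 ▸ Or.inl (P.le_refl _))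
          rw [if_neg h2, sub_zero]
          refine if_congr ⟨?_, ?_⟩ rfl rfl
          · intro hcon
            rw [Sum.inl.injEq, Prod.mk.injEq, Subtype.mk.injEq, Prod.mk.injEq] at hcon
            rw [Prod.mk.injEq, Prod.mk.injEq]
            exact ⟨hcon.1.1.symm, hcon.2.symm, hcon.1.2.symm⟩
          · intro hcon
            rw [Prod.mk.injEq, Prod.mk.injEq] at hcon
            rw [Sum.inl.injEq, Prod.mk.injEq, Subtype.mk.injEq, Prod.mk.injEq]
            exact ⟨⟨hcon.1.symm, hcon.2.2.symm⟩, hcon.2.1.symm⟩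
        · show _ = (e K x 0 y - e K (pminP P' x y) 1 (pminP P' x y)) (m'', 0, m'')
          rw [Pi.sub_apply, e_val, e_val]
          have h1 : ((m'', (0:Fin 2), m'') : Q × Fin 2 × Q) ≠ (x, 0, y) := by
            intro hcon
            rw [Prod.mk.injEq, Prod.mk.injEq] at hcon
            exact hne (hcon.1.symm.trans hcon.2.2)
          have h2 : ((m'', (0:Fin 2), m'') : Q × Fin 2 × Q) ≠ (pminP P' x y, 1, pminP P' x y) := by
            intro hcon
            rw [Prod.mk.injEq, Prod.mk.injEq] at hcon
            exact absurd hcon.2.1 (by decide)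
          rw [if_neg h1, if_neg h2, sub_zero]
          simp
      rw [key]
      exact Submodule.subset_span (Set.mem_image_of_mem _ ⟨x, y, hxy', Or.inl rfl⟩)
    · have hj1 : j = 1 := by omega
      subst hj1
      have key : (fun j' => if (Sum.inl (⟨(x, y), hxy⟩, (1:Fin 2))
            : ({p : Q × Q // ¬ (P.le p.1 p.2 ∨ P.le p.2 p.1)} × Fin 2) ⊕ Q) = j'
              then (1:K) else 0)
          = Lmap K P (e K (pminP P' x y) 0 (pminP P' x y)
              - e K (pminP P' (pminP P' x y) (pminP P' x y)) 1
                  (pminP P' (pminP P' x y) (pminP P' x y)))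
            - Lmap K P (e K (pminP P' x y) 0 (pminP P' x y) - e K x 1 y) := by
        funext i'
        obtain (⟨⟨⟨c, d⟩, hcd⟩, j'⟩ | m'') := i'
        · show _ = ((e K (pminP P' x y) 0 (pminP P' x y)
              - e K (pminP P' (pminP P' x y) (pminP P' x y)) 1
                  (pminP P' (pminP P' x y) (pminP P' x y))) (c, j', d))
            - ((e K (pminP P' x y) 0 (pminP P' x y) - e K x 1 y) (c, j', d))
          simp only [Pi.sub_apply, e_val]
          have hz : ∀ (u : Q) (i : Fin 2), ((c, j', d) : Q × Fin 2 × Q) ≠ (u, i, u) := by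
            intro u i hcon
            rw [Prod.mk.injEq, Prod.mk.injEq] at hcon
            exact hcd (hcon.1 ▸ hcon.2.2 ▸ Or.inl (P.le_refl _))
          rw [if_neg (hz _ _), if_neg (hz _ _)]
          have hr : (0:K) - 0 - (0 - (if ((c, j', d) : Q × Fin 2 × Q) = (x, 1, y)
              then (1:K) else 0)) = (if ((c, j', d) : Q × Fin 2 × Q) = (x, 1, y)
              then (1:K) else 0) := by ring
          rw [hr]
          refine if_congr ⟨?_, ?_⟩ rfl rfl
          · intro hcon
            rw [Sum.inl.injEq, Prod.mk.injEq, Subtype.mk.injEq, Prod.mk.injEq] at hcon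
            rw [Prod.mk.injEq, Prod.mk.injEq]
            exact ⟨hcon.1.1.symm, hcon.2.symm, hcon.1.2.symm⟩
          · intro hcon
            rw [Prod.mk.injEq, Prod.mk.injEq] at hcon
            rw [Sum.inl.injEq, Prod.mk.injEq, Subtype.mk.injEq, Prod.mk.injEq]
            exact ⟨⟨hcon.1.symm, hcon.2.2.symm⟩, hcon.2.1.symm⟩
        · show _ = ((e K (pminP P' x y) 0 (pminP P' x y)
              - e K (pminP P' (pminP P' x y) (pminP P' x y)) 1
                  (pminP P' (pminP P' x y) (pminP P' x y))) (m'', 0, m''))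
            - ((e K (pminP P' x y) 0 (pminP P' x y) - e K x 1 y) (m'', 0, m''))
          simp only [Pi.sub_apply, e_val]
          have h2 : ∀ u : Q, ((m'', (0:Fin 2), m'') : Q × Fin 2 × Q) ≠ (u, 1, u) := by
            intro u hcon
            rw [Prod.mk.injEq, Prod.mk.injEq] at hcon
            exact absurd hcon.2.1 (by decide)
          have h3 : ((m'', (0:Fin 2), m'') : Q × Fin 2 × Q) ≠ (x, 1, y) := by
            intro hcon
            rw [Prod.mk.injEq, Prod.mk.injEq] at hcon
            exact absurd hcon.2.1 (by decide)
          rw [if_neg (h2 _), if_neg h3, sub_zero, sub_self]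
          simp
      rw [key]
      exact Submodule.sub_mem _
        (Submodule.subset_span (Set.mem_image_of_mem _
          ⟨pminP P' x y, pminP P' x y, Or.inl (P'.le_refl _), Or.inl rfl⟩))
        (Submodule.subset_span (Set.mem_image_of_mem _ ⟨x, y, hxy', Or.inr rfl⟩))
  · -- diagonal slot
    have key : (fun j' => if (Sum.inr m
          : ({p : Q × Q // ¬ (P.le p.1 p.2 ∨ P.le p.2 p.1)} × Fin 2) ⊕ Q) = j'
            then (1:K) else 0)
        = Lmap K P (e K m 0 m - e K (pminP P' m m) 1 (pminP P' m m)) := by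
      funext i'
      obtain (⟨⟨⟨c, d⟩, hcd⟩, j'⟩ | m'') := i'
      · show _ = (e K m 0 m - e K (pminP P' m m) 1 (pminP P' m m)) (c, j', d)
        rw [Pi.sub_apply, e_val, e_val]
        have hz : ∀ (u : Q) (i : Fin 2), ((c, j', d) : Q × Fin 2 × Q) ≠ (u, i, u) := by
          intro u i hcon
          rw [Prod.mk.injEq, Prod.mk.injEq] at hcon
          exact hcd (hcon.1 ▸ hcon.2.2 ▸ Or.inl (P.le_refl _))
        rw [if_neg (hz _ _), if_neg (hz _ _), sub_zero]
        simp
      · show _ = (e K m 0 m - e K (pminP P' m m) 1 (pminP P' m m)) (m'', 0, m'')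
        rw [Pi.sub_apply, e_val, e_val]
        have h2 : ((m'', (0:Fin 2), m'') : Q × Fin 2 × Q) ≠ (pminP P' m m, 1, pminP P' m m) := by
          intro hcon
          rw [Prod.mk.injEq, Prod.mk.injEq] at hcon
          exact absurd hcon.2.1 (by decide)
        rw [if_neg h2, sub_zero]
        refine if_congr ⟨?_, ?_⟩ rfl rfl
        · intro hcon
          rw [Sum.inr.injEq] at hcon
          rw [Prod.mk.injEq, Prod.mk.injEq]
          exact ⟨hcon.symm, rfl, hcon.symm⟩
        · intro hcon
          rw [Prod.mk.injEq, Prod.mk.injEq] at hcon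
          rw [Sum.inr.injEq]
          exact hcon.1.symm
    rw [key]
    exact Submodule.subset_span (Set.mem_image_of_mem _
      ⟨m, m, Or.inl (P'.le_refl m), Or.inl rfl⟩)

lemma alpha_bound :
    Fintype.card (({p : Q × Q // ¬ (P.le p.1 p.2 ∨ P.le p.2 p.1)} × Fin 2) ⊕ Q)
      ≤ Module.finrank K (relSpaceP K P') := by
  have h2 : Module.finrank K (Submodule.map (Lmap K P) (relSpaceP K P'))
      ≤ Module.finrank K (relSpaceP K P') := Submodule.finrank_map_le _ _
  rw [map_L_top h, finrank_top, Module.finrank_pi] at h2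
  exact h2

end Alpha
/-- Let `≼` and `≼'` be two forest-poset orders on a finite set `Q` such that distinct
elements are `≼`-comparable exactly when they are `≼'`-incomparable (as for a thin
forest poset and its dual).  Then `Φ` is a linear automorphism of `V` and maps the
relation space `R_(Q,≼')` bijectively onto the annihilator `R_(Q,≼)^⊥` (the space of
relations of the Koszul dual `As(Q,≼)^!`). -/
theorem Phi_automorphism_maps_relations_to_dual_relations {K Q : Type*}
    [Field K] [CharZero K] [Fintype Q] (P P' : PartialOrder Q)
    (hP : IsForestOrder P) (hP' : IsForestOrder P')
    (h : ∀ a b : Q, a ≠ b → ((P.le a b ∨ P.le b a) ↔ ¬ (P'.le a b ∨ P'.le b a))) :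
    IsLinearMap K (Phi K P P') ∧ Function.Bijective (Phi K P P') ∧
    Set.BijOn (Phi K P P') (relSpaceP K P' : Set ((Q × Fin 2 × Q) → K))
      (annih K Q (relSpaceP K P) : Set ((Q × Fin 2 × Q) → K)) := by
  have hinj : Function.Injective (Phi K P P') := Phi_inj P P'
  refine ⟨⟨Phi_add P P', Phi_smul P P'⟩, ⟨hinj, ?_⟩, ?_⟩
  · exact (LinearMap.injective_iff_surjective (f := phiLM (K := K) P P')).mp hinj
  · have hle : Submodule.map (phiLM (K := K) P P') (relSpaceP K P')
        ≤ annih K Q (relSpaceP K P) := by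
      rw [relSpaceP, Submodule.map_span, Submodule.span_le]
      rintro w ⟨s, hs, rfl⟩
      exact orth_gen hP hP' h s hs
    have heq : Submodule.map (phiLM (K := K) P P') (relSpaceP K P')
        = annih K Q (relSpaceP K P) := by
      refine Submodule.eq_of_le_of_finrank_le hle ?_
      have e1 : Module.finrank K (relSpaceP K P')
          = Module.finrank K (Submodule.map (phiLM (K := K) P P') (relSpaceP K P')) :=
        (Submodule.equivMapOfInjective _ hinj _).finrank_eq
      calc Module.finrank K (annih K Q (relSpaceP K P))
          ≤ Fintype.card (({p : Q × Q // ¬ (P.le p.1 p.2 ∨ P.le p.2 p.1)} × Fin 2) ⊕ Q) :=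
            beta_bound
        _ ≤ Module.finrank K (relSpaceP K P') := alpha_bound h
        _ = _ := e1
    refine ⟨?_, hinj.injOn, ?_⟩
    · intro v hv
      have : Phi K P P' v ∈ annih K Q (relSpaceP K P) := by
        rw [← heq]
        exact Submodule.mem_map_of_mem hv
      exact this
    · intro w hw
      have hw' : w ∈ Submodule.map (phiLM (K := K) P P') (relSpaceP K P') := by
        rw [heq]; exact hw
      obtain ⟨v, hv, rfl⟩ := hw'
      exact ⟨v, hv, rfl⟩
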